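/- Let F ⊆ K be a field extension of finite degree i, let V be a finite-dimensional F-vector space, and let G be a subgroup of GL_F(V), acting on the base change K ⊗_F V via g ↦ 1_K ⊗ g. If there is a finite subset B ⊆ K ⊗_F V of cardinality c whose pointwise stabilizer in G is trivial (i.e. the only g ∈ G fixing every element of B under the base-changed action is the identity), then there is a finite subset B' ⊆ V of cardinality at most c·i whose pointwise stabilizer in G is trivial. In particular, if G has a base of size c on K ⊗_F V, then G has a base of size at most c·i on V. -/

import Mathlib

open TensorProduct

theorem stmt_10 (F K : Type*) [Field F] [Field K] [Algebra F K]
    [FiniteDimensional F K] (i : ℕ) (hi : Module.finrank F K = i)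
    (V : Type*) [AddCommGroup V] [Module F V] [FiniteDimensional F V]
    (G : Subgroup (V ≃ₗ[F] V))
    (c : ℕ) (B : Finset (TensorProduct F K V)) (hBc : B.card = c)
    (hB : ∀ g ∈ G, (∀ b ∈ B, LinearMap.baseChange K (g : V →ₗ[F] V) b = b) → g = 1) :
    ∃ B' : Finset V, B'.card ≤ c * i ∧ ∀ g ∈ G, (∀ b ∈ B', g b = b) → g = 1 := by
  classical
  subst hi
  set n := Module.finrank F K with hn
  let β : Module.Basis (Fin n) F K := Module.finBasis F K
  let φ : Fin n → TensorProduct F K V →ₗ[F] V := fun j =>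
    (TensorProduct.lid F V).toLinearMap ∘ₗ LinearMap.rTensor V (β.coord j)
  have hdecomp : ∀ t : TensorProduct F K V, t = ∑ j : Fin n, β j ⊗ₜ[F] φ j t := by
    intro t
    induction t using TensorProduct.induction_on with
    | zero => simp
    | tmul k v =>
      simp only [φ, LinearMap.comp_apply, LinearMap.rTensor_tmul,
        LinearEquiv.coe_coe, TensorProduct.lid_tmul, Module.Basis.coord_apply]
      conv_lhs => rw [← β.sum_repr k]
      rw [TensorProduct.sum_tmul]
      refine Finset.sum_congr rfl fun j _ => ?_
      rw [TensorProduct.smul_tmul]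
    | add x y hx hy =>
      simp only [map_add, TensorProduct.tmul_add, Finset.sum_add_distrib]
      rw [← hx, ← hy]
  have hcomm : ∀ (g : V ≃ₗ[F] V) (j : Fin n) (t : TensorProduct F K V),
      φ j (LinearMap.baseChange K (g : V →ₗ[F] V) t) = g (φ j t) := by
    intro g j t
    induction t using TensorProduct.induction_on with
    | zero => simp
    | tmul k v => simp [φ, LinearMap.baseChange_tmul]
    | add x y hx hy => simp [map_add, hx, hy]
  refine ⟨B.biUnion (fun b => Finset.image (fun j => φ j b) Finset.univ), ?_, ?_⟩
  · calc (B.biUnion (fun b => Finset.image (fun j => φ j b) Finset.univ)).card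
        ≤ ∑ b ∈ B, (Finset.image (fun j => φ j b) Finset.univ).card :=
          Finset.card_biUnion_le
      _ ≤ ∑ _b ∈ B, n := Finset.sum_le_sum fun b _ =>
          (Finset.card_image_le).trans (by simp)
      _ = c * n := by simp [hBc]
  · intro g hg hfix
    apply hB g hg
    intro b hb
    have hfix' : ∀ j : Fin n, g (φ j b) = φ j b := fun j =>
      hfix _ (Finset.mem_biUnion.mpr ⟨b, hb, Finset.mem_image.mpr ⟨j, Finset.mem_univ j, rfl⟩⟩)
    conv_lhs => rw [hdecomp b]
    rw [map_sum]
    conv_rhs => rw [hdecomp b]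
    refine Finset.sum_congr rfl fun j _ => ?_
    rw [show (LinearMap.baseChange K (g : V →ₗ[F] V)) (β j ⊗ₜ[F] φ j b) = β j ⊗ₜ[F] g (φ j b)
      from LinearMap.baseChange_tmul _ _ _, hfix' j]
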